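/- Let G' be a directed acyclic graph containing edge (x,y), with path-count matrix M' (M'[u,v] = number of distinct directed paths from u to v). If edge (x,y) is deleted yielding graph G with path-count matrix M, then M = M' − J·I, where J[z] = M[z,x] and I[z] = M[y,z] are counts in the graph G after deletion. -/

import Mathlib

/-- Number of directed paths (walks) from `u` to `v`: a path is encoded by the list `p`
of vertices following `u`; the empty path from `u` to `u` counts. In a DAG this set is
finite and every walk is a path. -/
noncomputable def pathCount (n : ℕ) (G : Fin n → Fin n → Prop) (u v : Fin n) : ℕ :=
  Set.ncard {p : List (Fin n) |
    List.Chain G u p ∧ (u :: p).getLast (List.cons_ne_nil u p) = v}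


section aux
variable {n : ℕ} {G G' : Fin n → Fin n → Prop} {x y : Fin n}

/-- Path set, phrased with `getLast?`. -/
def pSet (n : ℕ) (G : Fin n → Fin n → Prop) (u v : Fin n) : Set (List (Fin n)) :=
  {p | List.Chain G u p ∧ (u :: p).getLast? = some v}

lemma pathCount_eq_ncard (u v : Fin n) : pathCount n G u v = (pSet n G u v).ncard := by
  unfold pathCount pSet
  congr 1
  ext p
  simp only [Set.mem_setOf_eq, and_congr_right_iff]
  intro _
  rw [List.getLast?_eq_getLast_of_ne_nil (List.cons_ne_nil u p), Option.some_inj]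

lemma chain_nodup (hacyc : ∀ v, ¬ Relation.TransGen G v v) {u : Fin n} {p : List (Fin n)}
    (h : List.Chain G u p) : (u :: p).Nodup := by
  have h2 : List.Chain (Relation.TransGen G) u p :=
    List.IsChain.imp (fun a b hab => Relation.TransGen.single hab) h
  have h3 : List.Pairwise (Relation.TransGen G) (u :: p) :=
    (List.isChain_iff_pairwise (l := u :: p)).mp h2
  exact h3.imp fun hab heq => absurd (heq ▸ hab) (hacyc _)

lemma pSet_finite (hacyc : ∀ v, ¬ Relation.TransGen G v v) (u v : Fin n) :
    (pSet n G u v).Finite := by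
  apply (List.finite_length_le (Fin n) n).subset
  intro p hp
  have hn := chain_nodup hacyc hp.1
  have := hn.length_le_card
  simp only [List.length_cons, Fintype.card_fin] at this
  simpa using Nat.le_of_succ_le this


lemma getLast?_cons_or {α : Type*} {a v : α} {l : List α} {w : Option α}
    (h : ((a :: l).getLast?).or w = some v) : (a :: l).getLast? = some v := by
  rw [List.getLast?_eq_getLast_of_ne_nil (List.cons_ne_nil a l)] at h ⊢
  simpa using h

lemma chain_of_no_split (hG : ∀ u v, G u v ↔ G' u v ∧ ¬(u = x ∧ v = y)) :
    ∀ (u : Fin n) (p : List (Fin n)), List.Chain G' u p →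
      (∀ l l', u :: p ≠ l ++ x :: y :: l') → List.Chain G u p
  | _, [], _, _ => List.Chain.nil
  | u, b :: p, h, hns => by
    rcases List.chain_cons.mp h with ⟨hub, hbp⟩
    refine List.chain_cons.mpr ⟨(hG u b).mpr ⟨hub, ?_⟩, chain_of_no_split hG b p hbp ?_⟩
    · rintro ⟨rfl, rfl⟩; exact hns [] p rfl
    · intro l l' he
      exact hns (u :: l) l' (by rw [he]; rfl)

end aux

/-- Deleting the edge `(x,y)` from a DAG updates the path-count matrix by subtracting
the outer product: `M = M' − J·I`, where `J[z] = M[z,x]` and `I[z] = M[y,z]` are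
counts in the graph after deletion. -/
theorem stmt13 (n : ℕ) (G' G : Fin n → Fin n → Prop) (x y : Fin n)
    (hacyc' : ∀ v, ¬ Relation.TransGen G' v v)
    (hxy : G' x y)
    (hG : ∀ u v, G u v ↔ G' u v ∧ ¬ (u = x ∧ v = y)) :
    ∀ u v, (pathCount n G u v : ℤ)
      = (pathCount n G' u v : ℤ)
        - (pathCount n G u x : ℤ) * (pathCount n G y v : ℤ) := by
  -- G is a subrelation of G'
  have hsub : ∀ a b, G a b → G' a b := fun a b h => ((hG a b).mp h).1
  have hacyc : ∀ v, ¬ Relation.TransGen G v v := by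
    intro v hv
    exact hacyc' v (Relation.TransGen.mono (fun a b h => hsub a b h) v v hv)
  intro u v
  set S : Set (List (Fin n)) := pSet n G u v with hS
  set Sx : Set (List (Fin n)) := pSet n G u x with hSx
  set Sy : Set (List (Fin n)) := pSet n G y v with hSy
  set S' : Set (List (Fin n)) := pSet n G' u v with hS'
  set T : Set (List (Fin n)) := {p | p ∈ S' ∧ ∃ l₁ l₂, u :: p = l₁ ++ x :: y :: l₂} with hT
  -- concatenation map
  set f : List (Fin n) × List (Fin n) → List (Fin n) := fun pq => pq.1 ++ y :: pq.2 with hf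
  -- membership of concatenations in T
  have hmemT : ∀ p q, p ∈ Sx → q ∈ Sy → (p ++ y :: q) ∈ T := by
    rintro p q ⟨hpc, hpl⟩ ⟨hqc, hql⟩
    have hcx : List.Chain' G' (u :: p) := List.IsChain.imp hsub hpc
    have hcy : List.Chain' G' (y :: q) := List.IsChain.imp hsub hqc
    have happ : List.Chain' G' ((u :: p) ++ (y :: q)) := by
      refine hcx.append hcy ?_
      intro a ha b hb
      rw [hpl, Option.mem_def, Option.some_inj] at ha
      simp only [List.head?_cons, Option.mem_def, Option.some_inj] at hb
      rw [← ha, ← hb]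
      exact hxy
    refine ⟨⟨?_, ?_⟩, ?_⟩
    · exact happ
    · show ((u :: (p ++ y :: q))).getLast? = some v
      rw [show (u :: (p ++ y :: q)) = (u :: p) ++ (y :: q) from rfl,
        List.getLast?_append]
      rw [hql]; rfl
    · refine ⟨(u :: p).dropLast, q, ?_⟩
      have hx' : (u :: p).getLast (List.cons_ne_nil u p) = x := by
        have := List.getLast?_eq_getLast_of_ne_nil (l := u :: p) (List.cons_ne_nil u p)
        rw [hpl] at this
        exact (Option.some_inj.mp this.symm)
      calc u :: (p ++ y :: q) = (u :: p) ++ (y :: q) := rfl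
        _ = ((u :: p).dropLast ++ [(u :: p).getLast (List.cons_ne_nil u p)]) ++ (y :: q) := by
              rw [List.dropLast_append_getLast]
        _ = (u :: p).dropLast ++ x :: y :: q := by rw [hx']; simp
  -- S ⊆ S'
  have hSS' : S ⊆ S' := by
    rintro p ⟨hc, hl⟩
    exact ⟨List.IsChain.imp hsub hc, hl⟩
  -- decomposition S' = S ∪ T, disjoint
  have hcover : S' = S ∪ T := by
    apply Set.Subset.antisymm
    · rintro p ⟨hc, hl⟩
      by_cases hsp : ∃ l₁ l₂, u :: p = l₁ ++ x :: y :: l₂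
      · exact Or.inr ⟨⟨hc, hl⟩, hsp⟩
      · push_neg at hsp
        exact Or.inl ⟨chain_of_no_split hG u p hc hsp, hl⟩
    · rintro p (hp | hp)
      · exact hSS' hp
      · exact hp.1
  have hdisj : Disjoint S T := by
    rw [Set.disjoint_left]
    rintro p ⟨hc, _⟩ ⟨_, l₁, l₂, hsplit⟩
    have hc' : List.Chain' G (u :: p) := hc
    rw [hsplit] at hc'
    have := (List.isChain_split.mp hc').2
    have hGxy : G x y := List.isChain_cons_cons.mp this |>.1
    exact ((hG x y).mp hGxy).2 ⟨rfl, rfl⟩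
  -- T is the image of Sx ×ˢ Sy under f
  have himg : T = f '' (Sx ×ˢ Sy) := by
    apply Set.Subset.antisymm
    · rintro p ⟨⟨hc, hl⟩, l₁, l₂, hsplit⟩
      have hnod : (u :: p).Nodup := chain_nodup hacyc' hc
      -- x ∉ y :: l₂ in all cases
      have hxnot : x ∉ y :: l₂ := by
        have : (x :: y :: l₂).Nodup := by
          have hsub2 : (x :: y :: l₂).Sublist (u :: p) := by
            rw [hsplit]; exact (List.sublist_append_right l₁ _)
          exact hsub2.nodup hnod
        exact (List.nodup_cons.mp this).1
      -- chain on the tail piece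
      have hchy : ∀ l₂' , List.Chain G' y l₂' → x ∉ y :: l₂' →
          (y :: l₂').getLast? = some v → l₂' ∈ Sy := by
        intro l₂' hcy hxn hlast
        refine ⟨chain_of_no_split hG y l₂' hcy ?_, hlast⟩
        intro l l' he
        exact hxn (he ▸ (by simp : x ∈ l ++ x :: y :: l'))
      cases l₁ with
      | nil =>
        simp only [List.nil_append, List.cons.injEq] at hsplit
        obtain ⟨hux, hpe⟩ := hsplit
        refine ⟨([], l₂), ⟨⟨List.Chain.nil, by simp [hux]⟩, ?_⟩, by simp [hf, hpe]⟩
        refine hchy l₂ ?_ hxnot ?_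
        · rw [hpe] at hc; exact (List.chain_cons.mp hc).2
        · rw [hpe] at hl
          rw [show (u :: y :: l₂) = [u] ++ (y :: l₂) from rfl, List.getLast?_append] at hl
          exact getLast?_cons_or hl
      | cons a t =>
        simp only [List.cons_append, List.cons.injEq] at hsplit
        obtain ⟨hua, hpe⟩ := hsplit
        subst hua
        -- p = t ++ x :: y :: l₂
        have hc' : List.Chain' G' ((u :: t) ++ x :: (y :: l₂)) := by
          rw [hpe] at hc; exact hc
        obtain ⟨hA, hB⟩ := List.isChain_split.mp hc'
        have hAx : List.Chain G' u (t ++ [x]) := by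
          rw [show (u :: t) ++ [x] = u :: (t ++ [x]) from by simp] at hA
          exact hA
        have hBy : List.Chain G' y l₂ := (List.chain_cons.mp hB).2
        -- nodup of the prefix
        have hnodpre : (u :: (t ++ [x])).Nodup := by
          have hsub2 : (u :: (t ++ [x])).Sublist (u :: p) := by
            rw [hpe, show u :: (t ++ x :: y :: l₂) = (u :: (t ++ [x])) ++ (y :: l₂) from by simp]
            exact List.sublist_append_left _ _
          exact hsub2.nodup hnod
        refine ⟨(t ++ [x], l₂), ⟨⟨?_, ?_⟩, ?_⟩, by simp [hf, hpe]⟩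
        · -- t ++ [x] ∈ Sx : chain
          refine chain_of_no_split hG u (t ++ [x]) hAx ?_
          intro l l' he
          -- last of LHS is x, so x ∈ y :: l', but x also heads x :: y :: l'
          have hlastx : (l ++ x :: y :: l').getLast? = some x := by
            rw [← he, show u :: (t ++ [x]) = (u :: t) ++ [x] from by simp,
              List.getLast?_concat]
          have hxmem : x ∈ y :: l' := by
            apply List.mem_of_mem_getLast? (l := y :: l')
            rw [show (l ++ x :: y :: l') = (l ++ [x]) ++ (y :: l') from by simp,
              List.getLast?_append] at hlastx
            rw [Option.mem_def, getLast?_cons_or hlastx]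
          have : (x :: y :: l').Nodup := by
            have hsub2 : (x :: y :: l').Sublist (u :: (t ++ [x])) := by
              rw [he]; exact List.sublist_append_right l _
            exact hsub2.nodup hnodpre
          exact (List.nodup_cons.mp this).1 hxmem
        · -- t ++ [x] ∈ Sx : last
          rw [show u :: (t ++ [x]) = (u :: t) ++ [x] from by simp, List.getLast?_concat]
        · -- l₂ ∈ Sy
          refine hchy l₂ hBy hxnot ?_
          rw [hpe, show u :: (t ++ x :: y :: l₂) = ((u :: t) ++ [x]) ++ (y :: l₂) from by simp,
            List.getLast?_append] at hl
          exact getLast?_cons_or hl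
    · rintro _ ⟨⟨p, q⟩, ⟨hp, hq⟩, rfl⟩
      exact hmemT p q hp hq
  -- injectivity of f on Sx ×ˢ Sy
  have hinj : Set.InjOn f (Sx ×ˢ Sy) := by
    rintro ⟨p₁, q₁⟩ ⟨hp₁, hq₁⟩ ⟨p₂, q₂⟩ ⟨hp₂, hq₂⟩ heq
    simp only [hf] at heq
    have hynot : ∀ p q, p ∈ Sx → q ∈ Sy → y ∉ p := by
      intro p q hp hq
      have hmem := hmemT p q hp hq
      have hnod : (u :: (p ++ y :: q)).Nodup := chain_nodup hacyc' hmem.1.1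
      rw [show u :: (p ++ y :: q) = (u :: p) ++ (y :: q) from rfl] at hnod
      have := List.disjoint_of_nodup_append hnod
      intro hyp
      exact this (List.mem_cons_of_mem u hyp) (List.mem_cons_self (a := y) (l := q))
    have hy1 : y ∉ p₁ := hynot p₁ q₁ hp₁ hq₁
    have hy2 : y ∉ p₂ := hynot p₂ q₂ hp₂ hq₂
    rcases List.append_eq_append_iff.mp heq with ⟨a', ha, hb⟩ | ⟨c', hc, hd⟩
    · cases a' with
      | nil => simp at ha hb; simp [ha, hb]
      | cons w ws =>
        exfalso
        have : y = w := by
          have := hb; simp only [List.cons_append, List.cons.injEq] at this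
          exact this.1
        apply hy2
        rw [ha, ← this]
        simp
    · cases c' with
      | nil => simp at hc hd; simp [hc, hd]
      | cons w ws =>
        exfalso
        have : y = w := by
          have := hd; simp only [List.cons_append, List.cons.injEq] at this
          exact this.1
        apply hy1
        rw [hc, ← this]
        simp
  -- finiteness
  have hfinS : S.Finite := pSet_finite hacyc u v
  have hfinSx : Sx.Finite := pSet_finite hacyc u x
  have hfinSy : Sy.Finite := pSet_finite hacyc y v
  have hfinT : T.Finite := (pSet_finite hacyc' u v).subset (fun p hp => hp.1)
  -- counting
  have hcount : (pSet n G' u v).ncard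
      = (pSet n G u v).ncard + (pSet n G u x).ncard * (pSet n G y v).ncard := by
    have h1 : S'.ncard = S.ncard + T.ncard := by
      rw [hcover, Set.ncard_union_eq hdisj hfinS hfinT]
    have h2 : T.ncard = Sx.ncard * Sy.ncard := by
      rw [himg, Set.ncard_image_of_injOn hinj, ← Nat.card_coe_set_eq,
        Nat.card_congr (Equiv.Set.prod Sx Sy), Nat.card_prod,
        Nat.card_coe_set_eq, Nat.card_coe_set_eq]
    rw [← hS', ← hS, ← hSx, ← hSy, h1, h2]
  rw [pathCount_eq_ncard, pathCount_eq_ncard, pathCount_eq_ncard, pathCount_eq_ncard, hcount]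
  push_cast
  ring
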